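/- (Type D_n.) The cardinality of J_{k,r} satisfies |J_{k,r}| = Σ 2^{|supp⁺(𝐣)|}, where the sum runs over all 𝐣 ∈ J_{k,r} with supp⁻(𝐣) = ∅. -/

import Mathlib

/-- The position function of a strictly increasing partition (represented by its
finite support `S ⊆ ℤ`): `ι_S(j_s) = s` (1-based). -/
def iotaF (S : Finset ℤ) (x : ℤ) : ℕ := (S.filter (fun y => y ≤ x)).card

/-- `supp_m(S) = { j ∈ S : 2 ι_S(j) = j - m }`. -/
def suppm (m : ℤ) (S : Finset ℤ) : Finset ℤ :=
  S.filter (fun j => 2 * (iotaF S j : ℤ) = j - m)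

namespace CardJkrDAux

/-- `Cz t m = t.choose m` for `m ≥ 0`, else `0`. -/
def Cz (t : ℕ) (m : ℤ) : ℕ := if 0 ≤ m then t.choose m.toNat else 0

lemma Cz_neg {t : ℕ} {m : ℤ} (h : m < 0) : Cz t m = 0 := by
  simp [Cz, not_le.mpr h]

lemma Cz_natCast (t k : ℕ) : Cz t (k : ℤ) = t.choose k := by
  simp [Cz]

lemma Cz_pascal (t : ℕ) (m : ℤ) : Cz (t + 1) m = Cz t m + Cz t (m - 1) := by
  rcases lt_trichotomy m 0 with h | h | h
  · rw [Cz_neg h, Cz_neg h, Cz_neg (by omega)]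
  · subst h; simp [Cz]
  · have h1 : (0:ℤ) ≤ m := le_of_lt h
    have h2 : (0:ℤ) ≤ m - 1 := by omega
    have h3 : m.toNat = (m - 1).toNat + 1 := by omega
    simp only [Cz, if_pos h1, if_pos h2, h3, Nat.choose_succ_succ, Nat.succ_eq_add_one]
    omega

lemma choose_pascal (t k : ℕ) : (t + 1).choose (k + 1) = t.choose (k + 1) + t.choose k :=
  (Nat.choose_succ_succ t k).trans (Nat.add_comm _ _)

/-- The key arithmetic identity (Pascal-type recursion for the closed formula). -/
lemma key (t k : ℕ) (N A : ℤ) :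
    (t+1).choose (k+1) +
      (if A + 1 ≤ 2 * ((k:ℤ) + 1) + N then Cz (t+1) (A + 1 - ((k:ℤ)+1) - N - 1) else 0)
    = (t.choose (k+1) +
        (if A ≤ 2 * ((k:ℤ) + 1) + N then Cz t (A - ((k:ℤ)+1) - N - 1) else 0))
      + (if A + 1 = 2 * ((k:ℤ)+1) + N + 1 then 0
          else if A + 1 = 2 * ((k:ℤ)+1) + N then 2 else 1)
        * (t.choose k + (if A ≤ 2 * (k:ℤ) + N then Cz t (A - (k:ℤ) - N - 1) else 0)) := by
  rcases lt_trichotomy (A + 1) (2 * ((k:ℤ) + 1) + N) with hlt | heq | hgt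
  · -- strictly below the barrier: multiplier 1, all conditions true
    have c0 : ¬ (A + 1 = 2 * ((k:ℤ)+1) + N + 1) := by omega
    have c0' : ¬ (A + 1 = 2 * ((k:ℤ)+1) + N) := by omega
    have c1 : A + 1 ≤ 2 * ((k:ℤ) + 1) + N := by omega
    have c2 : A ≤ 2 * ((k:ℤ) + 1) + N := by omega
    have c3 : A ≤ 2 * (k:ℤ) + N := by omega
    rw [if_neg c0, if_neg c0', one_mul, if_pos c1, if_pos c2, if_pos c3]
    have e1 : A + 1 - ((k:ℤ)+1) - N - 1 = A - (k:ℤ) - N - 1 := by ring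
    have e2 : A - ((k:ℤ)+1) - N - 1 = (A - (k:ℤ) - N - 1) - 1 := by ring
    rw [e1, e2, Cz_pascal, choose_pascal]
    ring
  · -- on the barrier: multiplier 2
    have c0 : ¬ (A + 1 = 2 * ((k:ℤ)+1) + N + 1) := by omega
    have c1 : A + 1 ≤ 2 * ((k:ℤ) + 1) + N := by omega
    have c2 : A ≤ 2 * ((k:ℤ) + 1) + N := by omega
    have c3 : ¬ (A ≤ 2 * (k:ℤ) + N) := by omega
    rw [if_neg c0, if_pos heq, if_pos c1, if_pos c2, if_neg c3, add_zero]
    have e1 : A + 1 - ((k:ℤ)+1) - N - 1 = (k:ℤ) := by omega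
    have e2 : A - ((k:ℤ)+1) - N - 1 = (k:ℤ) - 1 := by omega
    rw [e1, e2, Cz_natCast]
    have q : (t+1).choose k = t.choose k + Cz t ((k:ℤ) - 1) := by
      rw [← Cz_natCast (t+1) k, Cz_pascal, Cz_natCast]
    rw [choose_pascal, q]
    ring
  · -- above the barrier
    have c1 : ¬ (A + 1 ≤ 2 * ((k:ℤ) + 1) + N) := by omega
    have c3 : ¬ (A ≤ 2 * (k:ℤ) + N) := by omega
    rw [if_neg c1, if_neg c3, add_zero, add_zero]
    by_cases hbad : A + 1 = 2 * ((k:ℤ)+1) + N + 1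
    · rw [if_pos hbad, zero_mul, add_zero]
      have c2 : A ≤ 2 * ((k:ℤ)+1) + N := by omega
      rw [if_pos c2]
      have e1 : A - ((k:ℤ)+1) - N - 1 = (k:ℤ) := by omega
      rw [e1, Cz_natCast, choose_pascal]
    · have c2 : ¬ (A ≤ 2 * ((k:ℤ)+1) + N) := by omega
      rw [if_neg hbad, if_neg (by omega : ¬ (A + 1 = 2 * ((k:ℤ)+1) + N)), one_mul,
        if_neg c2, add_zero, choose_pascal]

/-- The weight of a subset `S` in the sum. -/
def wt (N : ℤ) (k : ℕ) (S : Finset ℤ) : ℕ :=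
  if S.card = k ∧ suppm (N + 1) S = ∅ then 2 ^ (suppm N S).card else 0

/-- The weighted sum over subsets of `[r+1, r+t]`. -/
noncomputable def G (r N : ℤ) (t k : ℕ) : ℕ :=
  ∑ S ∈ (Finset.Icc (r + 1) (r + t)).powerset, wt N k S

lemma iotaF_insert_of_lt {S : Finset ℤ} {b x : ℤ} (hx : x < b) :
    iotaF (insert b S) x = iotaF S x := by
  unfold iotaF
  rw [Finset.filter_insert, if_neg (not_le.mpr hx)]

lemma iotaF_insert_self {S : Finset ℤ} {b : ℤ} (hb : ∀ x ∈ S, x < b) :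
    iotaF (insert b S) b = S.card + 1 := by
  have hbS : b ∉ S := fun h => absurd (hb b h) (lt_irrefl b)
  unfold iotaF
  rw [Finset.filter_insert, if_pos le_rfl,
    Finset.filter_true_of_mem (fun x hx => le_of_lt (hb x hx)),
    Finset.card_insert_of_notMem hbS]

lemma suppm_insert {S : Finset ℤ} {b m : ℤ} (hb : ∀ x ∈ S, x < b) :
    suppm m (insert b S) =
      if 2 * ((S.card : ℤ) + 1) = b - m then insert b (suppm m S) else suppm m S := by
  unfold suppm
  rw [Finset.filter_insert]
  have h2 : S.filter (fun j => 2 * (iotaF (insert b S) j : ℤ) = j - m)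
      = S.filter (fun j => 2 * (iotaF S j : ℤ) = j - m) :=
    Finset.filter_congr (fun j hj => by rw [iotaF_insert_of_lt (hb j hj)])
  rw [h2, iotaF_insert_self hb]
  by_cases hcond : 2 * ((S.card : ℤ) + 1) = b - m
  · rw [if_pos (by push_cast; omega), if_pos hcond]
  · rw [if_neg (by push_cast; omega), if_neg hcond]

lemma wt_insert {S : Finset ℤ} {b N : ℤ} (k : ℕ) (hb : ∀ x ∈ S, x < b) :
    wt N (k + 1) (insert b S) =
      (if b = 2 * ((k : ℤ) + 1) + N + 1 then 0
        else if b = 2 * ((k : ℤ) + 1) + N then 2 else 1) * wt N k S := by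
  have hbS : b ∉ S := fun h => absurd (hb b h) (lt_irrefl b)
  unfold wt
  rw [Finset.card_insert_of_notMem hbS, suppm_insert hb, suppm_insert hb]
  by_cases hc : S.card = k
  · subst hc
    by_cases hbad : b = 2 * ((S.card : ℤ) + 1) + N + 1
    · rw [if_pos hbad]
      rw [if_pos (by omega : 2 * ((S.card : ℤ) + 1) = b - (N + 1))]
      rw [if_neg (by simp [Finset.insert_ne_empty])]
      ring
    · rw [if_neg hbad]
      rw [if_neg (by omega : ¬ 2 * ((S.card : ℤ) + 1) = b - (N + 1))]
      by_cases hplus : b = 2 * ((S.card : ℤ) + 1) + N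
      · rw [if_pos hplus, if_pos (by omega : 2 * ((S.card : ℤ) + 1) = b - N)]
        have hbsupp : b ∉ suppm N S := fun h => hbS (Finset.mem_of_mem_filter b h)
        rw [Finset.card_insert_of_notMem hbsupp]
        by_cases hempty : suppm (N + 1) S = ∅
        · rw [if_pos ⟨rfl, hempty⟩, if_pos ⟨rfl, hempty⟩]; ring
        · rw [if_neg (by tauto), if_neg (by tauto)]
      · rw [if_neg hplus, if_neg (by omega : ¬ 2 * ((S.card : ℤ) + 1) = b - N)]
        by_cases hempty : suppm (N + 1) S = ∅
        · rw [if_pos ⟨rfl, hempty⟩, if_pos ⟨rfl, hempty⟩]; ring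
        · rw [if_neg (by tauto), if_neg (by tauto)]
  · have h1 : ¬ (S.card + 1 = k + 1 ∧
        (if 2 * ((S.card : ℤ) + 1) = b - (N + 1) then insert b (suppm (N + 1) S)
          else suppm (N + 1) S) = ∅) := fun h => hc (by omega)
    rw [if_neg h1,
      if_neg (show ¬ (S.card = k ∧ suppm (N + 1) S = ∅) from fun h => hc h.1), mul_zero]

lemma Icc_succ (r : ℤ) (t : ℕ) :
    Finset.Icc (r + 1) (r + (t + 1 : ℕ)) =
      insert (r + (t : ℕ) + 1) (Finset.Icc (r + 1) (r + (t : ℕ))) := by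
  ext x
  simp only [Finset.mem_Icc, Finset.mem_insert]
  push_cast
  omega

lemma G_succ (r N : ℤ) (t k : ℕ) :
    G r N (t + 1) (k + 1) = G r N t (k + 1) +
      (if r + (t : ℤ) + 1 = 2 * ((k : ℤ) + 1) + N + 1 then 0
        else if r + (t : ℤ) + 1 = 2 * ((k : ℤ) + 1) + N then 2 else 1) * G r N t k := by
  have hb : r + (t : ℕ) + 1 ∉ Finset.Icc (r + 1) (r + (t : ℕ)) := by
    simp only [Finset.mem_Icc]; omega
  unfold G
  rw [Icc_succ, Finset.sum_powerset_insert hb]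
  congr 1
  rw [Finset.mul_sum]
  apply Finset.sum_congr rfl
  intro S hS
  have hS' : ∀ x ∈ S, x < r + (t : ℕ) + 1 := by
    intro x hx
    have := Finset.mem_powerset.mp hS hx
    rw [Finset.mem_Icc] at this
    omega
  rw [wt_insert k hS']

lemma G_empty (r N : ℤ) (k : ℕ) : G r N 0 k = if k = 0 then 1 else 0 := by
  unfold G
  rw [show r + ((0 : ℕ) : ℤ) = r by push_cast; ring]
  rw [Finset.Icc_eq_empty (by omega), Finset.powerset_empty, Finset.sum_singleton]
  unfold wt
  by_cases hk : k = 0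
  · subst hk
    rw [if_pos ⟨by simp, by simp [suppm]⟩, if_pos rfl]
    simp [suppm]
  · rw [if_neg (fun h => hk (by simpa using h.1.symm)), if_neg hk]

lemma G_zero (r N : ℤ) (t : ℕ) : G r N t 0 = 1 := by
  unfold G
  have h : ∀ S ∈ (Finset.Icc (r + 1) (r + (t:ℕ))).powerset, wt N 0 S =
      if S = ∅ then 1 else 0 := by
    intro S _
    unfold wt
    by_cases hS : S = ∅
    · subst hS
      rw [if_pos ⟨by simp, by simp [suppm]⟩, if_pos rfl]
      simp [suppm]
    · rw [if_neg (fun h => hS (Finset.card_eq_zero.mp h.1)), if_neg hS]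
  rw [Finset.sum_congr rfl h, Finset.sum_ite_eq' _ ∅ (fun _ => 1),
    if_pos (Finset.empty_mem_powerset _)]

lemma G_formula (r N : ℤ) (hrN : r ≤ N) : ∀ t k, G r N t k =
    t.choose k + (if (r + t : ℤ) ≤ 2 * k + N then Cz t (r + t - k - N - 1) else 0) := by
  intro t
  induction t with
  | zero =>
    intro k
    rw [G_empty]
    have h1 : (r + ((0:ℕ):ℤ)) ≤ 2 * k + N := by push_cast; omega
    rw [if_pos h1, Cz_neg (by push_cast; omega)]
    cases k <;> simp
  | succ t ih =>
    intro k
    cases k with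
    | zero =>
      rw [G_zero]
      by_cases h1 : (r + ((t+1:ℕ):ℤ)) ≤ 2 * ((0:ℕ):ℤ) + N
      · rw [if_pos h1, Cz_neg (by push_cast at h1 ⊢; omega)]
        simp
      · rw [if_neg h1]; simp
    | succ k =>
      rw [G_succ, ih (k + 1), ih k]
      have e1 : ((t + 1 : ℕ) : ℤ) = (t : ℤ) + 1 := by push_cast; ring
      have e2 : (((k + 1) : ℕ) : ℤ) = (k : ℤ) + 1 := by push_cast; ring
      rw [e1, e2]
      have e3 : r + ((t:ℤ) + 1) = (r + (t:ℤ)) + 1 := by ring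
      rw [e3]
      exact (key t k N (r + (t:ℤ))).symm

end CardJkrDAux

open CardJkrDAux in
theorem card_Jkr_D (n i r M k : ℕ) (N : ℤ) (hn : 4 ≤ n) (hi : 1 < i)
    (hin : i ≤ n - 2) (hri : r ≤ i) (hpar : r % 2 = i % 2)
    (hM : M = (i - r) / 2) (hk : k ≤ M) (hN : N = (n : ℤ) - (i : ℤ) + (r : ℤ) - 2) :
    ((Finset.Icc ((r : ℤ) + 1) ((n : ℤ) - 1)).powerset.filter
        (fun S => S.card = k)).card =
      ∑ S ∈ (Finset.Icc ((r : ℤ) + 1) ((n : ℤ) - 1)).powerset.filter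
          (fun S => S.card = k ∧ suppm (N + 1) S = ∅),
        2 ^ (suppm N S).card := by
  set t : ℕ := n - 1 - r with ht
  have htz : ((n : ℤ) - 1) = (r : ℤ) + (t : ℕ) := by
    push_cast
    omega
  have hrN : (r : ℤ) ≤ N := by omega
  have h2k : 2 * k ≤ i - r := by omega
  -- rewrite RHS as G
  have hRHS : (∑ S ∈ (Finset.Icc ((r : ℤ) + 1) ((n : ℤ) - 1)).powerset.filter
          (fun S => S.card = k ∧ suppm (N + 1) S = ∅),
        2 ^ (suppm N S).card) = G r N t k := by
    rw [htz]
    unfold G wt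
    rw [Finset.sum_filter]
  rw [hRHS, G_formula r N hrN t k]
  have hcond : ¬ ((r : ℤ) + (t : ℕ) ≤ 2 * (k : ℕ) + N) := by
    push_cast
    omega
  rw [if_neg hcond, add_zero]
  rw [← Finset.powersetCard_eq_filter, Finset.card_powersetCard, Int.card_Icc]
  congr 1
  omega
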